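/- Fix r ≥ 1. Let a₁,…,a_k be r-coloured permutations such that the triples (des(a_i), comaj(a_i), col(a_i)) are pairwise distinct. Then the power series Φ(a_i) = p^{col(a_i)} x^{comaj(a_i)} t^{des(a_i)} / ((1−t)(1−xt)⋯(1−x^{|a_i|}t)), i = 1,…,k, are linearly independent over ℚ in ℚ[p₀,…,p_{r−1},x]⟦t⟧. -/

import Mathlib

open scoped Classical

noncomputable section

/-- A coloured permutation: a list of (symbol, colour) pairs. -/
abbrev CPerm : Type := List (ℕ × ℕ)

/-- `a` is a genuine coloured permutation: distinct, positive symbols. -/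
def IsCPerm (a : CPerm) : Prop :=
  (a.map Prod.fst).Nodup ∧ ∀ p ∈ a, 0 < p.1

/-- The colour order on coloured integers: `p < q` iff the colour of `p` is bigger
(as an integer), or the colours agree and the symbol of `p` is smaller. -/
def cLt (p q : ℕ × ℕ) : Prop :=
  q.2 < p.2 ∨ (p.2 = q.2 ∧ p.1 < q.1)

instance : DecidableRel cLt := fun p q => by unfold cLt; infer_instance

/-- The descent set of a coloured permutation (positions `0,…,n−1`; position `i ≥ 1`
is a descent iff the `(i+1)`-st entry is smaller than the `i`-th entry (1-indexed)
in the colour order; `0` is a descent iff the first colour is nonzero). -/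
def DesSet (a : CPerm) : Finset ℕ :=
  (Finset.range a.length).filter fun i =>
    if i = 0 then (a.getD 0 (0, 0)).2 ≠ 0
    else cLt (a.getD i (0, 0)) (a.getD (i - 1) (0, 0))

/-- Descent number. -/
def des (a : CPerm) : ℕ := (DesSet a).card

/-- Comajor index. -/
def comaj (a : CPerm) : ℕ := ∑ i ∈ DesSet a, (a.length - i)

/-- `colVec a j` is the number of entries of `a` of colour `j`. -/
def colVec (a : CPerm) (j : ℕ) : ℕ := (a.map Prod.snd).count j

/-- The multiset of shuffles of two lists. -/
def shuffles {α : Type*} : List α → List α → Multiset (List α)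
  | [], bs => {bs}
  | a :: as, [] => {a :: as}
  | a :: as, b :: bs =>
      ((shuffles as (b :: bs)).map (a :: ·)) + ((shuffles (a :: as) bs).map (b :: ·))
  termination_by as bs => as.length + bs.length

/-- The set of symbols of a coloured permutation. -/
def symbols (a : CPerm) : Finset ℕ := (a.map Prod.fst).toFinset

/-- The set of nonzero colours of a coloured permutation. -/
def paletteStar (a : CPerm) : Finset ℕ := ((a.map Prod.snd).toFinset).erase 0

/-- Two coloured permutations are symbol-disjoint if they share no symbols. -/
def SymbolDisjoint (a b : CPerm) : Prop := Disjoint (symbols a) (symbols b)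

/-- `a` is `r`-coloured: all colours lie in `{0,…,r−1}`. -/
def RColoured (r : ℕ) (a : CPerm) : Prop := ∀ p ∈ a, p.2 < r

/-- Symbols of a coloured configuration (= multiset of coloured permutations). -/
def msymbols (f : Multiset CPerm) : Finset ℕ := (f.map symbols).sup

/-- `palette*` of a coloured configuration. -/
def mpalette (f : Multiset CPerm) : Finset ℕ := (f.map paletteStar).sup

/-- The shuffle of two coloured configurations (bi-additive extension). -/
def mshuffle (f g : Multiset CPerm) : Multiset CPerm :=
  f.bind fun a => g.bind fun b => shuffles a b

/-- Hadamard product of formal power series. -/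
def hadamard {R : Type*} [Semiring R] (A B : PowerSeries R) : PowerSeries R :=
  PowerSeries.mk fun k => (PowerSeries.coeff k) A * (PowerSeries.coeff k) B

/-- The geometric series `1/(1 − c·Y) = Σ_k c^k Y^k`. -/
def geom {R : Type*} [Semiring R] (c : R) : PowerSeries R :=
  PowerSeries.mk fun k => c ^ k

/-- The field ℚ(X) of rational functions. -/
abbrev K : Type := RatFunc ℚ

/-- The variable X of ℚ(X). -/
def XX : K := RatFunc.X

/-- Membership in `U = {±X^k : k ∈ ℤ}`. -/
def InU (u : K) : Prop := ∃ k : ℤ, u = XX ^ k ∨ u = -XX ^ k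

/-- `α(a) = Π_i α(γ_i)`. -/
def alphaProd (α : ℕ → K) (a : CPerm) : K := (a.map fun p => α p.2).prod

/-- The summand of `W^ε_{f,α}` corresponding to a single coloured permutation. -/
def Wterm (ε : ℤ) (α : ℕ → K) (a : CPerm) : PowerSeries K :=
  (PowerSeries.C : K →+* PowerSeries K) (alphaProd α a * XX ^ (ε * (comaj a : ℤ))) * PowerSeries.X ^ des a *
    ∏ i ∈ Finset.range (a.length + 1), geom (XX ^ (ε * (i : ℤ)))

/-- `W^ε_{f,α} = Σ_a f_a α(a) X^{ε·comaj(a)} Y^{des(a)} / ((1−Y)⋯(1−X^{ε|a|}Y))`. -/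
def W (ε : ℤ) (α : ℕ → K) (f : Multiset CPerm) : PowerSeries K :=
  (f.map (Wterm ε α)).sum

/-- `(f,α)` is a labelled coloured configuration. -/
def IsLCC (f : Multiset CPerm) (α : ℕ → K) : Prop :=
  (∀ a ∈ f, IsCPerm a) ∧ (∀ c, InU (α c)) ∧ (∀ c ∉ mpalette f, α c = 1)


/-- The polynomial ring `ℚ[p₀,p₁,…][x]`; `x` is `Polynomial.X` and `p_j` is
`MvPolynomial.X j`. -/
abbrev PXRing : Type := Polynomial (MvPolynomial ℕ ℚ)

/-- The monomial `p^{col(a)} = p₀^{col₀(a)} ⋯`. -/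
def pMon (a : CPerm) : MvPolynomial ℕ ℚ := (a.map fun p => MvPolynomial.X p.2).prod

/-- `Φ(a) = p^{col(a)} x^{comaj(a)} t^{des(a)} / ((1−t)(1−xt)⋯(1−xⁿt))`. -/
def Phi (a : CPerm) : PowerSeries PXRing :=
  (PowerSeries.C : PXRing →+* PowerSeries PXRing) (Polynomial.C (pMon a) * Polynomial.X ^ comaj a) *
    PowerSeries.X ^ des a *
    ∏ i ∈ Finset.range (a.length + 1), geom ((Polynomial.X : PXRing) ^ i)

/-- The colour vector as a finsupp. -/
def colFin (a : CPerm) : ℕ →₀ ℕ := Multiset.toFinsupp (↑(a.map Prod.snd))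

lemma colFin_apply (a : CPerm) (j : ℕ) : colFin a j = colVec a j := by
  simp [colFin, colVec, Multiset.toFinsupp_apply]

lemma pMon_eq (a : CPerm) : pMon a = MvPolynomial.monomial (colFin a) 1 := by
  induction a with
  | nil => simp [pMon, colFin]
  | cons p l ih =>
      have hc : colFin (p :: l) = Finsupp.single p.2 1 + colFin l := by
        ext c
        simp [colFin, Multiset.toFinsupp_apply, List.count_cons, Finsupp.add_apply,
          Multiset.count_cons]
        by_cases hcp : c = p.2 <;> simp [hcp, eq_comm, Nat.add_comm]
      rw [pMon, List.map_cons, List.prod_cons, ← pMon, ih, hc,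
        show (MvPolynomial.X p.2 : MvPolynomial ℕ ℚ) =
          MvPolynomial.monomial (Finsupp.single p.2 1) (1 : ℚ) from by
            rw [← MvPolynomial.X_pow_eq_monomial, pow_one],
        MvPolynomial.monomial_mul, one_mul]

/-- The coefficient-extraction linear functional. -/
def ellLM (d m : ℕ) (μ : ℕ →₀ ℕ) : PowerSeries PXRing →ₗ[ℚ] ℚ where
  toFun F := MvPolynomial.coeff μ ((PowerSeries.coeff d F).coeff m)
  map_add' F G := by simp
  map_smul' c F := by
    show MvPolynomial.coeff μ ((PowerSeries.coeff d (c • F)).coeff m) = _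
    rw [show PowerSeries.coeff d (c • F) = c • PowerSeries.coeff d F from rfl,
      Polynomial.coeff_smul, MvPolynomial.coeff_smul]
    simp

lemma constCoeff_geom {R : Type*} [Semiring R] (c : R) :
    PowerSeries.constantCoeff (geom c) = 1 := by
  simp [geom, ← PowerSeries.coeff_zero_eq_constantCoeff]

lemma coeff_Phi (a : CPerm) (d : ℕ) :
    PowerSeries.coeff d (Phi a) =
      if des a = d then Polynomial.C (pMon a) * Polynomial.X ^ comaj a
      else if des a ≤ d then
        (Polynomial.C (pMon a) * Polynomial.X ^ comaj a) *
          PowerSeries.coeff (d - des a)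
            (∏ i ∈ Finset.range (a.length + 1), geom ((Polynomial.X : PXRing) ^ i))
      else 0 := by
  have h : Phi a = (PowerSeries.C : PXRing →+* PowerSeries PXRing) (Polynomial.C (pMon a) * Polynomial.X ^ comaj a) *
      ((∏ i ∈ Finset.range (a.length + 1), geom ((Polynomial.X : PXRing) ^ i)) *
        PowerSeries.X ^ des a) := by
    rw [Phi]; ring
  rw [h, PowerSeries.coeff_C_mul, PowerSeries.coeff_mul_X_pow']
  by_cases h1 : des a = d
  · subst h1
    simp only [if_pos rfl, le_refl, if_pos, Nat.sub_self]
    rw [PowerSeries.coeff_zero_eq_constantCoeff, map_prod]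
    simp [constCoeff_geom]
  · by_cases h2 : des a ≤ d <;> simp [h1, h2]

lemma ell_Phi (a : CPerm) (d m : ℕ) (μ : ℕ →₀ ℕ) (hd : d ≤ des a) :
    ellLM d m μ (Phi a) =
      if des a = d ∧ m = comaj a ∧ μ = colFin a then 1 else 0 := by
  show MvPolynomial.coeff μ ((PowerSeries.coeff d (Phi a)).coeff m) = _
  rw [coeff_Phi]
  by_cases h1 : des a = d
  · rw [if_pos h1]
    rw [Polynomial.coeff_C_mul, Polynomial.coeff_X_pow]
    by_cases h2 : m = comaj a
    · rw [if_pos h2, mul_one, pMon_eq, MvPolynomial.coeff_monomial]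
      by_cases h3 : colFin a = μ <;> simp [h1, h2, h3, eq_comm (a := μ)]
    · rw [if_neg h2]
      simp [h1, h2]
  · have : ¬ des a ≤ d := fun h => h1 (le_antisymm (le_of_not_gt (fun hlt => h1 (le_antisymm h hd))) hd)
    rw [if_neg h1, if_neg this]
    simp [h1]

/-- **Lemma.** If the triples `(des(aᵢ), comaj(aᵢ), col(aᵢ))` attached to
`r`-coloured permutations `a₁,…,a_k` are pairwise distinct, then the power series
`Φ(a₁),…,Φ(a_k)` are linearly independent over `ℚ`. -/
theorem linearIndependent_Phi (r : ℕ) (hr : 1 ≤ r) (k : ℕ) (a : Fin k → CPerm)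
    (ha : ∀ i, IsCPerm (a i)) (hra : ∀ i, RColoured r (a i))
    (hdist : Function.Injective fun i => (des (a i), comaj (a i), colVec (a i))) :
    LinearIndependent ℚ fun i => Phi (a i) := by
  rw [linearIndependent_iff']
  intro s g hsum
  suffices H : ∀ d, ∀ j ∈ s, des (a j) = d → g j = 0 by
    intro i hi; exact H _ i hi rfl
  intro d
  induction d using Nat.strong_induction_on with
  | _ d IH =>
    intro j hj hdj
    have key := congrArg (ellLM d (comaj (a j)) (colFin (a j))) hsum
    rw [map_sum, map_zero] at key
    have hterm : ∀ i ∈ s, i ≠ j →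
        ellLM d (comaj (a j)) (colFin (a j)) (g i • Phi (a i)) = 0 := by
      intro i hi hij
      rw [map_smul]
      rcases lt_trichotomy (des (a i)) d with h | h | h
      · rw [IH _ h i hi rfl]; simp
      · -- des a i = d; show the ell value is zero
        rw [ell_Phi _ _ _ _ (le_of_eq h.symm)]
        have : ¬ (des (a i) = d ∧ comaj (a j) = comaj (a i) ∧ colFin (a j) = colFin (a i)) := by
          rintro ⟨h1, h2, h3⟩
          apply hij.symm
          apply hdist
          have hcv : colVec (a j) = colVec (a i) := by
            funext c; rw [← colFin_apply, ← colFin_apply, h3]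
          simp only [Prod.mk.injEq]
          exact ⟨by rw [hdj, h1], h2, hcv⟩
        rw [if_neg this]; simp
      · -- des a i > d: coefficient of t^d is 0
        show g i • MvPolynomial.coeff _ ((PowerSeries.coeff d (Phi (a i))).coeff _) = 0
        rw [coeff_Phi, if_neg (by omega), if_neg (by omega)]
        simp
    rw [Finset.sum_eq_single_of_mem j hj hterm] at key
    rw [map_smul, ell_Phi _ _ _ _ hdj.ge] at key
    rw [if_pos ⟨hdj, rfl, rfl⟩] at key
    simpa using key
end
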